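/- For all real numbers s1, s2 ≥ 0 and every γ > 0, one has (s1 - s2)(s1^γ - s2^γ) ≥ (4γ/(γ+1)²)·(s1^{(γ+1)/2} - s2^{(γ+1)/2})². -/

import Mathlib

open Real Set

/-- The inner inequality on `[0,1]`:
`1 - u^γ + γ(1-u) ≥ (4γ/(γ+1)) (1 - u^((γ+1)/2))`. -/
lemma aux_g_nonneg {γ : ℝ} (hγ : 0 < γ) {u : ℝ} (hu0 : 0 ≤ u) (hu1 : u ≤ 1) :
    (4 * γ / (γ + 1)) * (1 - u ^ ((γ + 1) / 2)) ≤ 1 - u ^ γ + γ * (1 - u) := by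
  set m : ℝ := (γ + 1) / 2 with hm
  have hγ1 : (0:ℝ) < γ + 1 := by linarith
  set g : ℝ → ℝ := fun u => 1 - u ^ γ + γ * (1 - u) - (4 * γ / (γ + 1)) * (1 - u ^ m)
    with hg
  have hmpos : 0 < m := by positivity
  have hcont : ContinuousOn g (Icc 0 1) := by
    have h1 : ContinuousOn (fun u : ℝ => u ^ γ) (Icc 0 1) := fun x _ =>
      (Real.continuousAt_rpow_const x γ (Or.inr hγ.le)).continuousWithinAt
    have h2 : ContinuousOn (fun u : ℝ => u ^ m) (Icc 0 1) := fun x _ =>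
      (Real.continuousAt_rpow_const x m (Or.inr hmpos.le)).continuousWithinAt
    fun_prop
  have hderiv : ∀ x ∈ Ioo (0:ℝ) 1, HasDerivAt g
      (-(γ * x ^ (γ - 1)) - γ + (4 * γ / (γ + 1)) * (m * x ^ (m - 1))) x := by
    intro x hx
    have hx0 : x ≠ 0 := ne_of_gt hx.1
    have d1 : HasDerivAt (fun u : ℝ => u ^ γ) (γ * x ^ (γ - 1)) x :=
      Real.hasDerivAt_rpow_const (Or.inl hx0)
    have d2 : HasDerivAt (fun u : ℝ => u ^ m) (m * x ^ (m - 1)) x :=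
      Real.hasDerivAt_rpow_const (Or.inl hx0)
    have := ((((hasDerivAt_const x (1:ℝ)).sub d1).add
      (((hasDerivAt_const x (1:ℝ)).sub (hasDerivAt_id x)).const_mul γ)).sub
      (((hasDerivAt_const x (1:ℝ)).sub d2).const_mul (4 * γ / (γ + 1))))
    exact this.congr_deriv (by ring)
  have hanti : AntitoneOn g (Icc 0 1) := by
    apply antitoneOn_of_deriv_nonpos (convex_Icc 0 1) hcont
    · intro x hx
      rw [interior_Icc] at hx
      exact (hderiv x hx).differentiableAt.differentiableWithinAt
    · intro x hx
      rw [interior_Icc] at hx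
      rw [(hderiv x hx).deriv]
      have hx0 : 0 < x := hx.1
      have key : x ^ (γ - 1) = (x ^ ((γ - 1) / 2)) ^ (2:ℕ) := by
        rw [← Real.rpow_natCast (x ^ ((γ - 1) / 2)) 2, ← Real.rpow_mul hx0.le]
        norm_num
      have hm1 : m - 1 = (γ - 1) / 2 := by rw [hm]; ring
      have hcoef : (4 * γ / (γ + 1)) * m = 2 * γ := by
        rw [hm]; field_simp; ring
      have hsq : 0 ≤ (x ^ ((γ - 1) / 2) - 1) ^ 2 := sq_nonneg _
      rw [hm1]
      nlinarith [sq_nonneg (x ^ ((γ - 1) / 2) - 1)]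
  have h01 : (1:ℝ) ∈ Icc (0:ℝ) 1 := by constructor <;> norm_num
  have hu : u ∈ Icc (0:ℝ) 1 := ⟨hu0, hu1⟩
  have := hanti hu h01 hu1
  have hg1 : g 1 = 0 := by
    simp [hg, Real.one_rpow]
  have : 0 ≤ g u := by rw [← hg1]; exact this
  simp only [hg] at this
  linarith

/-- Derivative-level inequality: for `0 ≤ b ≤ a`, `0 < γ`. -/
lemma aux_inner {γ : ℝ} (hγ : 0 < γ) {a b : ℝ} (hb : 0 ≤ b) (hba : b ≤ a) :
    (4 * γ / (γ + 1)) * (a ^ γ - a ^ ((γ - 1) / 2) * b ^ ((γ + 1) / 2)) ≤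
      a ^ γ - b ^ γ + γ * ((a - b) * a ^ (γ - 1)) := by
  rcases eq_or_lt_of_le (hb.trans hba) with ha | ha
  · -- a = 0, hence b = 0
    have hb0 : b = 0 := le_antisymm (by linarith) hb
    rw [← ha, hb0]
    rw [Real.zero_rpow (ne_of_gt hγ), Real.zero_rpow (by positivity : (γ+1)/2 ≠ 0)]
    norm_num
  · -- a > 0
    set u : ℝ := b / a with hu
    have hu0 : 0 ≤ u := div_nonneg hb ha.le
    have hu1 : u ≤ 1 := (div_le_one ha).mpr hba
    have hbua : b = u * a := by rw [hu, div_mul_cancel₀ _ (ne_of_gt ha)]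
    have key := aux_g_nonneg hγ hu0 hu1
    have haγ : 0 < a ^ γ := Real.rpow_pos_of_pos ha γ
    -- express everything in terms of u and a^γ
    have e1 : b ^ γ = u ^ γ * a ^ γ := by
      rw [hbua, Real.mul_rpow hu0 ha.le]
    have e2 : (a - b) * a ^ (γ - 1) = (1 - u) * a ^ γ := by
      rw [hbua]
      have h' : a ^ (γ - 1) * a = a ^ γ := by
        have h2 := Real.rpow_add ha (γ - 1) 1
        rw [Real.rpow_one] at h2
        rw [← h2]
        ring_nf
      rw [← h']
      ring
    have e3 : a ^ ((γ - 1) / 2) * b ^ ((γ + 1) / 2) = u ^ ((γ + 1) / 2) * a ^ γ := by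
      rw [hbua, Real.mul_rpow hu0 ha.le, ← mul_assoc, mul_comm (a ^ ((γ-1)/2)),
        mul_assoc, ← Real.rpow_add ha]
      ring_nf
    rw [e1, e2, e3]
    calc (4 * γ / (γ + 1)) * (a ^ γ - u ^ ((γ + 1) / 2) * a ^ γ)
        = ((4 * γ / (γ + 1)) * (1 - u ^ ((γ + 1) / 2))) * a ^ γ := by ring
      _ ≤ (1 - u ^ γ + γ * (1 - u)) * a ^ γ := by
          apply mul_le_mul_of_nonneg_right key haγ.le
      _ = a ^ γ - u ^ γ * a ^ γ + γ * ((1 - u) * a ^ γ) := by ring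
  

lemma aux_main {γ : ℝ} (hγ : 0 < γ) {b a : ℝ} (hb : 0 ≤ b) (hba : b ≤ a) :
    (4 * γ / (γ + 1) ^ 2) * (a ^ ((γ + 1) / 2) - b ^ ((γ + 1) / 2)) ^ 2 ≤
      (a - b) * (a ^ γ - b ^ γ) := by
  set m : ℝ := (γ + 1) / 2 with hm
  have hmpos : 0 < m := by positivity
  set c : ℝ := 4 * γ / (γ + 1) ^ 2 with hc
  set F : ℝ → ℝ := fun s => (s - b) * (s ^ γ - b ^ γ) - c * (s ^ m - b ^ m) ^ 2 with hF
  have hcont : ContinuousOn F (Icc b a) := by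
    have h1 : ContinuousOn (fun s : ℝ => s ^ γ) (Icc b a) := fun x _ =>
      (Real.continuousAt_rpow_const x γ (Or.inr hγ.le)).continuousWithinAt
    have h2 : ContinuousOn (fun s : ℝ => s ^ m) (Icc b a) := fun x _ =>
      (Real.continuousAt_rpow_const x m (Or.inr hmpos.le)).continuousWithinAt
    fun_prop
  have hderiv : ∀ x ∈ Ioo b a, HasDerivAt F
      ((x ^ γ - b ^ γ) + (x - b) * (γ * x ^ (γ - 1))
        - c * (2 * (x ^ m - b ^ m) * (m * x ^ (m - 1)))) x := by
    intro x hx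
    have hx0 : x ≠ 0 := ne_of_gt (lt_of_le_of_lt hb hx.1)
    have d1 : HasDerivAt (fun s : ℝ => s ^ γ) (γ * x ^ (γ - 1)) x :=
      Real.hasDerivAt_rpow_const (Or.inl hx0)
    have d2 : HasDerivAt (fun s : ℝ => s ^ m) (m * x ^ (m - 1)) x :=
      Real.hasDerivAt_rpow_const (Or.inl hx0)
    have d3 : HasDerivAt (fun s : ℝ => (s ^ m - b ^ m) ^ 2)
        (2 * (x ^ m - b ^ m) * (m * x ^ (m - 1))) x := by
      have := ((d2.sub_const (b ^ m)).pow 2)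
      exact this.congr_deriv (by ring)
    have := ((((hasDerivAt_id x).sub_const b).mul (d1.sub_const (b ^ γ))).sub
      (d3.const_mul c))
    simp only [id_eq] at this
    exact this.congr_deriv (by ring)
  have hmono : MonotoneOn F (Icc b a) := by
    apply monotoneOn_of_deriv_nonneg (convex_Icc b a) hcont
    · intro x hx
      rw [interior_Icc] at hx
      exact (hderiv x hx).differentiableAt.differentiableWithinAt
    · intro x hx
      rw [interior_Icc] at hx
      rw [(hderiv x hx).deriv]
      have hx0 : 0 < x := lt_of_le_of_lt hb hx.1
      have hbx : b ≤ x := hx.1.le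
      have inner := aux_inner hγ hb hbx
      have hm1 : m - 1 = (γ - 1) / 2 := by rw [hm]; ring
      have hcoef : c * (2 * m) = 4 * γ / (γ + 1) := by
        rw [hc, hm]
        have : (γ + 1) ≠ 0 := by positivity
        field_simp
      have e : x ^ (m - 1) * x ^ m = x ^ γ := by
        rw [← Real.rpow_add hx0, hm1, hm]; ring_nf
      have e2 : x ^ (m - 1) * b ^ m = x ^ ((γ - 1) / 2) * b ^ ((γ + 1) / 2) := by
        rw [hm1, hm]
      have key : c * (2 * (x ^ m - b ^ m) * (m * x ^ (m - 1)))
          = (4 * γ / (γ + 1)) * (x ^ γ - x ^ ((γ - 1) / 2) * b ^ ((γ + 1) / 2)) := by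
        rw [← e, ← e2]
        linear_combination (x ^ (m - 1) * x ^ m - x ^ (m - 1) * b ^ m) * hcoef
      rw [key]
      linarith [inner]
  have hmem_b : b ∈ Icc b a := ⟨le_refl b, hba⟩
  have hmem_a : a ∈ Icc b a := ⟨hba, le_refl a⟩
  have := hmono hmem_b hmem_a hba
  have hFb : F b = 0 := by simp [hF]
  rw [hFb] at this
  simp only [hF] at this
  linarith

theorem elementary_power_inequality (s1 s2 γ : ℝ) (hs1 : 0 ≤ s1) (hs2 : 0 ≤ s2)
    (hγ : 0 < γ) :
    (s1 - s2) * (s1 ^ γ - s2 ^ γ) ≥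
      (4 * γ / (γ + 1) ^ 2) * (s1 ^ ((γ + 1) / 2) - s2 ^ ((γ + 1) / 2)) ^ 2 := by
  rcases le_total s2 s1 with h | h
  · exact aux_main hγ hs2 h
  · have := aux_main hγ hs1 h
    have e1 : (s2 - s1) * (s2 ^ γ - s1 ^ γ) = (s1 - s2) * (s1 ^ γ - s2 ^ γ) := by ring
    have e2 : (s2 ^ ((γ + 1) / 2) - s1 ^ ((γ + 1) / 2)) ^ 2
        = (s1 ^ ((γ + 1) / 2) - s2 ^ ((γ + 1) / 2)) ^ 2 := by ring
    rw [e1, e2] at this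
    exact this
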